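/- Let F_q be the free group on q ≥ 1 generators, with symmetric generating set S consisting of the q generators and their inverses, and consider the Cayley graph on F_q in which x and y are adjacent iff x·y⁻¹ ∈ S. If D ⊆ F_q is finite, nonempty, and connected as an induced subgraph of the Cayley graph, then the outer boundary satisfies |∂′_S D| = (2q−2)·|D| + 2. -/

import Mathlib

/-- The symmetric generating set of the free group on `q` generators:
the generators and their inverses. -/
def freeGen (q : ℕ) : Set (FreeGroup (Fin q)) :=
  {x | ∃ i : Fin q, x = FreeGroup.of i ∨ x = (FreeGroup.of i)⁻¹}

/-- The Cayley graph of the free group `F_q` with respect to `freeGen q`: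
`x` and `y` are adjacent iff `x * y⁻¹` is a generator or the inverse of one. -/
def cayley (q : ℕ) : SimpleGraph (FreeGroup (Fin q)) :=
  SimpleGraph.fromRel fun x y => x * y⁻¹ ∈ freeGen q

/-- The outer boundary of `D ⊆ F_q` with respect to `freeGen q`. -/
def outerBoundary (q : ℕ) (D : Set (FreeGroup (Fin q))) : Set (FreeGroup (Fin q)) :=
  {x | x ∉ D ∧ ∃ s ∈ freeGen q, s * x ∈ D}

namespace Stmt5Aux

variable {q : ℕ}

/-- A single letter of the free group. -/
def letter (p : Fin q × Bool) : FreeGroup (Fin q) :=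
  if p.2 then FreeGroup.of p.1 else (FreeGroup.of p.1)⁻¹

lemma toWord_letter (p : Fin q × Bool) : (letter p).toWord = [p] := by
  obtain ⟨i, b⟩ := p
  cases b <;>
    simp [letter, FreeGroup.toWord_of, FreeGroup.toWord_inv, FreeGroup.invRev]

lemma letter_injective : Function.Injective (letter (q := q)) := by
  intro p p' h
  have := congrArg FreeGroup.toWord h
  rw [toWord_letter, toWord_letter] at this
  simpa using this

lemma letter_ne_one (p : Fin q × Bool) : letter p ≠ 1 := by
  intro h
  have := congrArg FreeGroup.toWord h
  rw [toWord_letter, FreeGroup.toWord_one] at this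
  simp at this

lemma letter_inv (i : Fin q) (b : Bool) : (letter (i, b))⁻¹ = letter (i, !b) := by
  cases b <;> simp [letter]

lemma mem_freeGen_iff {x : FreeGroup (Fin q)} : x ∈ freeGen q ↔ ∃ p, x = letter p := by
  constructor
  · rintro ⟨i, h | h⟩
    · exact ⟨(i, true), h⟩
    · exact ⟨(i, false), h⟩
  · rintro ⟨⟨i, b⟩, rfl⟩
    cases b
    · exact ⟨i, Or.inr rfl⟩
    · exact ⟨i, Or.inl rfl⟩

lemma toWord_mul (x y : FreeGroup (Fin q)) :
    (x * y).toWord = FreeGroup.reduce (x.toWord ++ y.toWord) := by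
  conv_lhs => rw [← FreeGroup.mk_toWord (x := x), ← FreeGroup.mk_toWord (x := y)]
  rw [FreeGroup.mul_mk, FreeGroup.toWord_mk]

/-- The key structural lemma: multiplying by a letter either cancels the head or prepends. -/
lemma toWord_letter_mul (i : Fin q) (b : Bool) (g : FreeGroup (Fin q)) :
    (letter (i, b) * g).toWord =
      if g.toWord.head? = some (i, !b) then g.toWord.tail else (i, b) :: g.toWord := by
  rw [toWord_mul, toWord_letter]
  rcases hw : g.toWord with _ | ⟨⟨j, c⟩, t⟩
  · simp
  · have hred : FreeGroup.reduce ((j, c) :: t) = (j, c) :: t := by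
      rw [← hw]; exact FreeGroup.reduce_toWord g
    simp only [List.singleton_append, FreeGroup.reduce.cons, hred]
    by_cases h : i = j ∧ b = !c
    · obtain ⟨rfl, rfl⟩ := h
      simp
    · have : ((j, c) : Fin q × Bool) ≠ (i, !b) := by
        rintro h'
        injection h' with h1 h2
        exact h ⟨h1.symm, by rw [h2, Bool.not_not]⟩
      simp [h, this]

lemma norm_letter_mul_of_head_ne (i : Fin q) (b : Bool) (g : FreeGroup (Fin q))
    (h : g.toWord.head? ≠ some (i, !b)) :
    (letter (i, b) * g).toWord = (i, b) :: g.toWord := by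
  rw [toWord_letter_mul, if_neg h]

lemma letter_mul_ne (p : Fin q × Bool) (g : FreeGroup (Fin q)) : letter p * g ≠ g := by
  intro h
  exact letter_ne_one p (mul_right_cancel (b := g) (by rw [one_mul, h]))

/-- Characterization of adjacency in the Cayley graph. -/
lemma cayley_adj {x y : FreeGroup (Fin q)} :
    (cayley q).Adj x y ↔ ∃ p, x = letter p * y := by
  rw [cayley, SimpleGraph.fromRel_adj]
  constructor
  · rintro ⟨hne, h | h⟩
    · obtain ⟨p, hp⟩ := mem_freeGen_iff.1 h
      exact ⟨p, by rw [← hp]; group⟩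
    · obtain ⟨⟨i, b⟩, hp⟩ := mem_freeGen_iff.1 h
      refine ⟨(i, !b), ?_⟩
      have : x = (y * x⁻¹)⁻¹ * y := by group
      rw [this, hp, letter_inv]
  · rintro ⟨p, rfl⟩
    refine ⟨letter_mul_ne p y, Or.inl ?_⟩
    rw [mem_freeGen_iff]
    exact ⟨p, by group⟩

lemma outerBoundary_finite {D : Set (FreeGroup (Fin q))} (hfin : D.Finite) :
    (outerBoundary q D).Finite := by
  have hsub : outerBoundary q D ⊆
      ⋃ p : Fin q × Bool, (fun y => (letter p)⁻¹ * y) '' D := by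
    rintro x ⟨-, s, hs, hsx⟩
    obtain ⟨p, rfl⟩ := mem_freeGen_iff.1 hs
    exact Set.mem_iUnion.2 ⟨p, ⟨letter p * x, hsx, by group⟩⟩
  exact (Set.finite_iUnion fun p => hfin.image _).subset hsub

lemma letter_mul_left_injective (g : FreeGroup (Fin q)) :
    Function.Injective (fun p : Fin q × Bool => letter p * g) := fun p p' h =>
  letter_injective (mul_right_cancel h)

lemma ncard_image_letter_mul (g : FreeGroup (Fin q)) (A : Set (Fin q × Bool)) :
    ((fun p : Fin q × Bool => letter p * g) '' A).ncard = A.ncard :=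
  Set.ncard_image_of_injective A (letter_mul_left_injective g)

lemma outerBoundary_singleton (g : FreeGroup (Fin q)) :
    outerBoundary q {g} = (fun p : Fin q × Bool => letter p * g) '' Set.univ := by
  ext x
  constructor
  · rintro ⟨hx, s, hs, hsx⟩
    obtain ⟨⟨i, b⟩, rfl⟩ := mem_freeGen_iff.1 hs
    refine ⟨(i, !b), Set.mem_univ _, ?_⟩
    have : x = (letter (i, b))⁻¹ * (letter (i, b) * x) := by group
    rw [this, hsx, letter_inv]
  · rintro ⟨p, -, rfl⟩
    obtain ⟨i, b⟩ := p
    refine ⟨letter_mul_ne _ g, letter (i, !b), mem_freeGen_iff.2 ⟨_, rfl⟩, ?_⟩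
    rw [← letter_inv]
    simp

lemma ncard_univ_letters : (Set.univ : Set (Fin q × Bool)).ncard = 2 * q := by
  rw [Set.ncard_univ, Nat.card_eq_fintype_card]
  simp [Fintype.card_prod, mul_comm]

/-- Removing a "leaf" (a vertex whose only neighbor in `D` is `pa`) keeps connectivity. -/
lemma connected_diff {D : Set (FreeGroup (Fin q))} {x pa : FreeGroup (Fin q)}
    (hxD : x ∈ D) (hpD : pa ∈ D) (hpx : pa ≠ x)
    (huniq : ∀ y ∈ D, (cayley q).Adj x y → y = pa)
    (hconn : ((cayley q).induce D).Connected) :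
    ((cayley q).induce (D \ {x})).Connected := by
  have hpD' : pa ∈ D \ {x} := ⟨hpD, hpx⟩
  have key : ∀ (a b : ↥D) (w : ((cayley q).induce D).Walk a b)
      (hb : (b : FreeGroup (Fin q)) ≠ x),
      ((a : FreeGroup (Fin q)) = x →
        ((cayley q).induce (D \ {x})).Reachable ⟨pa, hpD'⟩ ⟨b, b.2, hb⟩) ∧
      (∀ ha : (a : FreeGroup (Fin q)) ≠ x,
        ((cayley q).induce (D \ {x})).Reachable ⟨a, a.2, ha⟩ ⟨b, b.2, hb⟩) := by
    intro a b w
    induction w with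
    | nil =>
      intro hb
      exact ⟨fun ha => absurd ha hb, fun _ => SimpleGraph.Reachable.refl _⟩
    | @cons u v bb hadj w ih =>
      intro hb
      have hadj' : (cayley q).Adj (u : FreeGroup (Fin q)) (v : FreeGroup (Fin q)) := hadj
      obtain ⟨ih1, ih2⟩ := ih hb
      constructor
      · intro hu
        have hv : (v : FreeGroup (Fin q)) ≠ x := by
          intro hvx
          exact (cayley q).irrefl (by rw [hu, hvx] at hadj'; exact hadj')
        have hvpa : (v : FreeGroup (Fin q)) = pa := huniq v v.2 (hu ▸ hadj')
        have hEq : (⟨pa, hpD'⟩ : ↥(D \ {x})) = ⟨v, v.2, hv⟩ := Subtype.ext hvpa.symm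
        rw [hEq]
        exact ih2 hv
      · intro hu
        by_cases hv : (v : FreeGroup (Fin q)) = x
        · have hupa : (u : FreeGroup (Fin q)) = pa :=
            huniq u u.2 (by rw [← hv]; exact hadj'.symm)
          have hEq : (⟨u, u.2, hu⟩ : ↥(D \ {x})) = ⟨pa, hpD'⟩ := Subtype.ext hupa
          rw [hEq]
          exact ih1 hv
        · have hedge : ((cayley q).induce (D \ {x})).Adj ⟨u, u.2, hu⟩ ⟨v, v.2, hv⟩ := hadj'
          exact hedge.reachable.trans (ih2 hv)
  rw [SimpleGraph.connected_iff]
  refine ⟨?_, ⟨⟨pa, hpD'⟩⟩⟩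
  intro u v
  have hu : (u : FreeGroup (Fin q)) ≠ x := fun h => u.2.2 h
  have hv : (v : FreeGroup (Fin q)) ≠ x := fun h => v.2.2 h
  obtain ⟨w⟩ := hconn.preconnected ⟨u, u.2.1⟩ ⟨v, v.2.1⟩
  have := (key _ _ w hv).2 hu
  convert this using 2

lemma exists_adj_of_walk {V : Type*} {G : SimpleGraph V} {a b : V}
    (w : G.Walk a b) (h : a ≠ b) : ∃ c, G.Adj a c := by
  cases w with
  | nil => exact absurd rfl h
  | cons h' _ => exact ⟨_, h'⟩

lemma main (q : ℕ) (hq : 1 ≤ q) :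
    ∀ n (D : Set (FreeGroup (Fin q))), D.Finite → D.Nonempty →
      ((cayley q).induce D).Connected → D.ncard = n →
      (outerBoundary q D).ncard = (2 * q - 2) * n + 2 := by
  intro n
  induction n using Nat.strong_induction_on with
  | _ n ih =>
  intro D hfin hne hconn hcard
  rcases n with _ | (_ | m)
  · exact absurd hcard (by have := (Set.ncard_pos hfin).mpr hne; omega)
  · obtain ⟨g, rfl⟩ := Set.ncard_eq_one.1 hcard
    rw [outerBoundary_singleton, ncard_image_letter_mul, ncard_univ_letters]
    omega
  · -- |D| = m + 2 ≥ 2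
    -- pick x of maximal word length
    obtain ⟨x, hxD, hmaxw⟩ : ∃ x ∈ D, ∀ y ∈ D,
        x.toWord.length ≤ y.toWord.length → x.toWord.length = y.toWord.length := by
      obtain ⟨x, hx, h⟩ := Set.exists_max_image D (fun g => g.toWord.length) hfin hne
      exact ⟨x, hx, fun y hy hle => le_antisymm hle (h y hy)⟩
    have hmax : ∀ y ∈ D, y.toWord.length ≤ x.toWord.length := by
      intro y hy
      rcases le_or_gt y.toWord.length x.toWord.length with h | h
      · exact h
      · exact absurd (hmaxw y hy h.le) (by omega)
    -- x ≠ 1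
    have hx1 : x ≠ 1 := by
      rintro rfl
      have hsub : D ⊆ {1} := by
        intro y hy
        have := hmax y hy
        rw [FreeGroup.toWord_one] at this
        simp only [List.length_nil, Nat.le_zero, List.length_eq_zero_iff] at this
        exact FreeGroup.toWord_eq_nil_iff.1 this
      have := Set.ncard_le_ncard hsub (Set.finite_singleton 1)
      rw [Set.ncard_singleton, hcard] at this
      omega
    obtain ⟨⟨j, c⟩, t, hw⟩ : ∃ p t, x.toWord = p :: t := by
      rcases hwx : x.toWord with _ | ⟨p, t⟩
      · exact absurd (FreeGroup.toWord_eq_nil_iff.1 hwx) hx1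
      · exact ⟨p, t, rfl⟩
    have hhead : x.toWord.head? = some (j, c) := by rw [hw]; rfl
    set pa : FreeGroup (Fin q) := letter (j, !c) * x with hpa_def
    have hpa_word : pa.toWord = t := by
      rw [hpa_def, toWord_letter_mul, if_pos (by rw [hhead, Bool.not_not]), hw]
      rfl
    have hpa_ne : pa ≠ x := by
      intro h
      have := congrArg List.length (congrArg FreeGroup.toWord h)
      rw [hpa_word, hw] at this
      simp at this
    have hx_eq : letter (j, c) * pa = x := by
      rw [hpa_def, ← mul_assoc, ← letter_inv, mul_inv_cancel, one_mul]
    -- uniqueness of the neighbor of x inside D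
    have huniq : ∀ y ∈ D, (cayley q).Adj x y → y = pa := by
      intro y hy hadj
      obtain ⟨⟨i, b⟩, hyx⟩ := cayley_adj.1 hadj.symm
      by_cases hcond : x.toWord.head? = some (i, !b)
      · rw [hhead] at hcond
        injection hcond with hcond
        rw [Prod.mk.injEq] at hcond
        obtain ⟨h1, h2⟩ := hcond
        have hb : b = !c := by rw [h2, Bool.not_not]
        rw [hyx, ← h1, hb, hpa_def]
      · have hylen : y.toWord = (i, b) :: x.toWord := by
          rw [hyx]; exact norm_letter_mul_of_head_ne i b x hcond
        have := hmax y hy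
        rw [hylen] at this
        simp at this
    -- pa ∈ D
    have hpaD : pa ∈ D := by
      obtain ⟨a, ha, b, hb, hab⟩ := (Set.one_lt_ncard hfin).1 (by omega)
      have hy : ∃ y, y ∈ D ∧ y ≠ x := by
        by_cases hax : a = x
        · exact ⟨b, hb, by rw [← hax]; exact fun h => hab (h.symm ▸ rfl)⟩
        · exact ⟨a, ha, hax⟩
      obtain ⟨y, hyD, hyx⟩ := hy
      obtain ⟨w⟩ := hconn.preconnected ⟨x, hxD⟩ ⟨y, hyD⟩
      obtain ⟨z, hz⟩ := exists_adj_of_walk w (fun h => hyx (congrArg Subtype.val h).symm)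
      have : (z : FreeGroup (Fin q)) = pa := huniq z z.2 hz
      rw [← this]; exact z.2
    -- the smaller set
    set D' : Set (FreeGroup (Fin q)) := D \ {x} with hD'_def
    have hD'fin : D'.Finite := hfin.subset Set.diff_subset
    have hpaD' : pa ∈ D' := ⟨hpaD, hpa_ne⟩
    have hD'card : D'.ncard = m + 1 := by
      rw [hD'_def, Set.ncard_diff_singleton_of_mem hxD, hcard]
      omega
    have hD'conn : ((cayley q).induce D').Connected :=
      connected_diff hxD hpaD hpa_ne huniq hconn
    have hIH : (outerBoundary q D').ncard = (2 * q - 2) * (m + 1) + 2 :=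
      ih (m + 1) (by omega) D' hD'fin ⟨pa, hpaD'⟩ hD'conn hD'card
    -- the children of x
    set C : Set (FreeGroup (Fin q)) :=
      (fun p : Fin q × Bool => letter p * x) '' {p | p ≠ (j, !c)} with hC_def
    have hchild : ∀ p : Fin q × Bool, p ≠ (j, !c) →
        (letter p * x).toWord = p :: x.toWord := by
      rintro ⟨i, b⟩ hp
      apply norm_letter_mul_of_head_ne
      rw [hhead]
      intro hcon
      injection hcon with hcon
      rw [Prod.mk.injEq] at hcon
      obtain ⟨h1, h2⟩ := hcon
      exact hp (by rw [← h1, h2, Bool.not_not])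
    have hC_notD : ∀ z ∈ C, z ∉ D := by
      rintro z ⟨p, hp, rfl⟩ hzD
      have := hmax _ hzD
      rw [hchild p hp] at this
      simp at this
    -- C is inside the boundary of D
    have hC_bd : C ⊆ outerBoundary q D := by
      rintro z hz
      obtain ⟨⟨i, b⟩, hp, rfl⟩ := hz
      refine ⟨hC_notD _ ⟨(i, b), hp, rfl⟩, letter (i, !b), mem_freeGen_iff.2 ⟨_, rfl⟩, ?_⟩
      rw [← letter_inv, inv_mul_cancel_left]
      exact hxD
    -- C is disjoint from the boundary of D'
    have hC_bd' : ∀ z ∈ C, z ∉ outerBoundary q D' := by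
      rintro z hz ⟨hz1, s, hs, hsz⟩
      obtain ⟨⟨i, b⟩, hp, rfl⟩ := hz
      obtain ⟨⟨i', b'⟩, rfl⟩ := mem_freeGen_iff.1 hs
      have hzword : (letter (i, b) * x).toWord = (i, b) :: x.toWord := hchild _ hp
      by_cases hcond : (letter (i, b) * x).toWord.head? = some (i', !b')
      · rw [hzword] at hcond
        injection hcond with hcond
        rw [Prod.mk.injEq] at hcond
        obtain ⟨h1, h2⟩ := hcond
        have : letter (i', b') * (letter (i, b) * x) = x := by
          rw [← h1, show b' = !b by rw [h2, Bool.not_not], ← letter_inv,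
            inv_mul_cancel_left]
        rw [this] at hsz
        exact hsz.2 rfl
      · have : (letter (i', b') * (letter (i, b) * x)).toWord
            = (i', b') :: (letter (i, b) * x).toWord :=
          norm_letter_mul_of_head_ne _ _ _ hcond
        have hlen := hmax _ hsz.1
        rw [this, hzword] at hlen
        simp only [List.length_cons] at hlen
        omega
    -- x is in the boundary of D'
    have hx_bd' : x ∈ outerBoundary q D' := by
      refine ⟨fun h => h.2 rfl, letter (j, !c), mem_freeGen_iff.2 ⟨_, rfl⟩, hpaD'⟩
    -- the decomposition
    have hdecomp : outerBoundary q D = (outerBoundary q D' \ {x}) ∪ C := by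
      ext z
      constructor
      · rintro ⟨hzD, hwit⟩
        by_cases hz' : ∃ s ∈ freeGen q, s * z ∈ D'
        · exact Or.inl ⟨⟨fun h => hzD h.1, hz'⟩, fun h => hzD (h ▸ hxD)⟩
        · obtain ⟨s, hs, hsz⟩ := hwit
          obtain ⟨⟨i, b⟩, rfl⟩ := mem_freeGen_iff.1 hs
          have hszx : letter (i, b) * z = x := by
            by_contra hne'
            exact hz' ⟨letter (i, b), mem_freeGen_iff.2 ⟨_, rfl⟩, hsz, hne'⟩
          have hzeq : z = letter (i, !b) * x := by
            rw [← hszx, ← letter_inv, inv_mul_cancel_left]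
          refine Or.inr ⟨(i, !b), ?_, hzeq.symm⟩
          intro hcon
          rw [hcon] at hzeq
          rw [← hpa_def] at hzeq
          exact hzD (hzeq ▸ hpaD)
      · rintro (⟨⟨hz1, hwit⟩, hz2⟩ | hz)
        · refine ⟨?_, ?_⟩
          · intro hzD
            exact hz1 ⟨hzD, fun h => (hz2 h) |>.elim⟩
          · obtain ⟨s, hs, hsz⟩ := hwit
            exact ⟨s, hs, hsz.1⟩
        · exact hC_bd hz
    -- counting
    have hCfin : C.Finite := (Set.toFinite _).image _
    have hbd'fin : (outerBoundary q D').Finite := outerBoundary_finite hD'fin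
    have hdisj : Disjoint (outerBoundary q D' \ {x}) C := by
      rw [Set.disjoint_right]
      intro z hz hz'
      exact hC_bd' z hz hz'.1
    have hCcard : C.ncard = 2 * q - 1 := by
      rw [hC_def, ncard_image_letter_mul]
      have : {p : Fin q × Bool | p ≠ (j, !c)} = Set.univ \ {(j, !c)} := by
        ext p; simp
      rw [this, Set.ncard_diff_singleton_of_mem (Set.mem_univ _),
        ncard_univ_letters]
    rw [hdecomp, Set.ncard_union_eq hdisj (hbd'fin.subset Set.diff_subset) hCfin,
      Set.ncard_diff_singleton_of_mem hx_bd', hIH, hCcard]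
    have h1 : (2 * q - 2) * (m + 1 + 1) = (2 * q - 2) * (m + 1) + (2 * q - 2) :=
      Nat.mul_succ _ _
    omega

end Stmt5Aux

theorem stmt5 (q : ℕ) (hq : 1 ≤ q) (D : Set (FreeGroup (Fin q)))
    (hfin : D.Finite) (hne : D.Nonempty)
    (hconn : ((cayley q).induce D).Connected) :
    (outerBoundary q D).ncard = (2 * q - 2) * D.ncard + 2 := by
  exact Stmt5Aux.main q hq D.ncard D hfin hne hconn rfl
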